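/- For every real s > 1, the 2×2 matrix M(s) = [[1, 1−3s], [−1, −1+s]] has eigenvalues λ± = (s ± √(s²+8s))/2, and the eigenvector corresponding to λ₋ = (s − √(s²+8s))/2 is proportional to (s−1−λ₋, 1), whose slope 1/(s−1−λ₋) = 2/(s−2+√(s²+8s)) lies strictly between 0 and 1. Moreover, for every s > 1 this slope satisfies the strict inequality 2/(s−2+√(s²+8s)) > 1/(2s−1). -/
import Mathlib


open Set

noncomputable section

/-- Eigenvalue/eigenvector analysis of the saddle matrix `M(s) = [[1, 1-3s], [-1, -1+s]]`
for `s > 1`: the eigenvalues are `λ± = (s ± √(s²+8s))/2`; the eigenvector for `λ₋` is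
`(s-1-λ₋, 1)`, whose slope `1/(s-1-λ₋) = 2/(s-2+√(s²+8s))` lies strictly in `(0,1)` and is
strictly greater than `1/(2s-1)`. -/
theorem saddle_matrix_eigen (s : ℝ) (hs : 1 < s) (lm lp : ℝ)
    (hlm : lm = (s - Real.sqrt (s ^ 2 + 8 * s)) / 2)
    (hlp : lp = (s + Real.sqrt (s ^ 2 + 8 * s)) / 2) :
    (!![(1 : ℝ), 1 - 3 * s; -1, -1 + s]).mulVec ![s - 1 - lm, 1] =
      lm • ![s - 1 - lm, 1] ∧
    (![s - 1 - lm, (1 : ℝ)] ≠ 0) ∧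
    (∃ v : Fin 2 → ℝ, v ≠ 0 ∧
      (!![(1 : ℝ), 1 - 3 * s; -1, -1 + s]).mulVec v = lp • v) ∧
    1 / (s - 1 - lm) = 2 / (s - 2 + Real.sqrt (s ^ 2 + 8 * s)) ∧
    0 < 2 / (s - 2 + Real.sqrt (s ^ 2 + 8 * s)) ∧
    2 / (s - 2 + Real.sqrt (s ^ 2 + 8 * s)) < 1 ∧
    1 / (2 * s - 1) < 2 / (s - 2 + Real.sqrt (s ^ 2 + 8 * s)) := by
  set r := Real.sqrt (s ^ 2 + 8 * s) with hr
  have hr2 : r ^ 2 = s ^ 2 + 8 * s := Real.sq_sqrt (by nlinarith)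
  have hr0 : 0 ≤ r := Real.sqrt_nonneg _
  have hrs : s < r := by nlinarith
  have hden : 0 < s - 2 + r := by nlinarith
  refine ⟨?_, ?_, ⟨![s - 1 - lp, 1], ?_, ?_⟩, ?_, ?_, ?_, ?_⟩
  · funext i
    fin_cases i <;>
      simp [Matrix.mulVec, dotProduct, Fin.sum_univ_two] <;>
      nlinarith [hr2, hlm]
  · intro h
    have := congrFun h 1
    simp at this
  · intro h
    have := congrFun h 1
    simp at this
  · funext i
    fin_cases i <;>
      simp [Matrix.mulVec, dotProduct, Fin.sum_univ_two] <;>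
      nlinarith [hr2, hlp]
  · have : s - 1 - lm = (s - 2 + r) / 2 := by rw [hlm]; ring
    rw [this]
    rw [div_div_eq_mul_div, one_mul]
  · positivity
  · rw [div_lt_one hden]; nlinarith
  · rw [div_lt_div_iff₀ (by nlinarith) hden]; nlinarith
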